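/- Let Z_1, ..., Z_m, Z_{m+1}, Z_{m+2} be conditionally i.i.d. given W, and let V be a random variable such that each Z_j is conditionally independent of V given W and the full collection is exchangeable given (W,V). Then for each j, I(W; Z_{j+1} | Z_1,...,Z_j, V) ≥ I(W; Z_{j+2} | Z_1,...,Z_{j+1}, V). Consequently I(W; (Z_1,...,Z_m) | V) ≥ m · I(W; Z_{m+1} | Z_1,...,Z_m, V). -/

import Mathlib

open scoped BigOperators

/-- Distribution (pushforward) of a random variable `X` under weights `p`. -/
noncomputable def distOf {Ω α : Type*} [Fintype Ω] [DecidableEq α]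
    (p : Ω → ℝ) (X : Ω → α) (a : α) : ℝ :=
  ∑ ω, if X ω = a then p ω else 0

/-- Shannon entropy of a random variable. -/
noncomputable def entOf {Ω α : Type*} [Fintype Ω] [Fintype α] [DecidableEq α]
    (p : Ω → ℝ) (X : Ω → α) : ℝ :=
  -∑ a, distOf p X a * Real.log (distOf p X a)

/-- Conditional entropy H(Y|X). -/
noncomputable def condEntOf {Ω α β : Type*} [Fintype Ω] [Fintype α] [Fintype β]
    [DecidableEq α] [DecidableEq β] (p : Ω → ℝ) (Y : Ω → β) (X : Ω → α) : ℝ :=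
  entOf p (fun ω => (Y ω, X ω)) - entOf p X

/-- Mutual information I(A;B). -/
noncomputable def miOf {Ω α β : Type*} [Fintype Ω] [Fintype α] [Fintype β]
    [DecidableEq α] [DecidableEq β] (p : Ω → ℝ) (A : Ω → α) (B : Ω → β) : ℝ :=
  entOf p A + entOf p B - entOf p (fun ω => (A ω, B ω))

/-- Conditional mutual information I(A;B|C). -/
noncomputable def cmiOf {Ω α β γ : Type*} [Fintype Ω] [Fintype α] [Fintype β] [Fintype γ]
    [DecidableEq α] [DecidableEq β] [DecidableEq γ]
    (p : Ω → ℝ) (A : Ω → α) (B : Ω → β) (C : Ω → γ) : ℝ :=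
  condEntOf p A C - condEntOf p A (fun ω => (B ω, C ω))

/-- `p` is a probability mass function on the finite sample space. -/
def IsPMF {Ω : Type*} [Fintype Ω] (p : Ω → ℝ) : Prop :=
  (∀ ω, 0 ≤ p ω) ∧ ∑ ω, p ω = 1

/-- A and B are conditionally independent given C. -/
def CondIndep {Ω α β γ : Type*} [Fintype Ω] [DecidableEq α] [DecidableEq β] [DecidableEq γ]
    (p : Ω → ℝ) (A : Ω → α) (B : Ω → β) (C : Ω → γ) : Prop :=
  ∀ a b c, distOf p (fun ω => (A ω, B ω, C ω)) (a, b, c) * distOf p C c =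
    distOf p (fun ω => (A ω, C ω)) (a, c) * distOf p (fun ω => (B ω, C ω)) (b, c)

/-- Equality in distribution. -/
def IdentDist {Ω α : Type*} [Fintype Ω] [DecidableEq α]
    (p : Ω → ℝ) (X Y : Ω → α) : Prop := ∀ a, distOf p X a = distOf p Y a

/-- Bayesian risk: infimum over measurable (automatic here) decision rules of the
expected loss. -/
noncomputable def risk {Ω α 𝒞 𝒜 : Type*} [Fintype Ω]
    (p : Ω → ℝ) (ℓ : 𝒞 → 𝒜 → ℝ) (C : Ω → 𝒞) (A : Ω → α) : ℝ :=
  ⨅ ψ : α → 𝒜, ∑ ω, p ω * ℓ (C ω) (ψ (A ω))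


section Aux

variable {Ω α β γ : Type*} [Fintype Ω] {p : Ω → ℝ}

lemma distOf_nonneg [DecidableEq α] (hp : ∀ ω, 0 ≤ p ω) (X : Ω → α) (a : α) :
    0 ≤ distOf p X a :=
  Finset.sum_nonneg fun ω _ => by by_cases h : X ω = a <;> simp [h, hp ω]

lemma sum_weight [Fintype α] [DecidableEq α] (p : Ω → ℝ) (X : Ω → α) (f : α → ℝ) :
    ∑ a, distOf p X a * f a = ∑ ω, p ω * f (X ω) := by
  unfold distOf
  simp only [Finset.sum_mul, ite_mul, zero_mul]
  rw [Finset.sum_comm]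
  refine Finset.sum_congr rfl fun ω _ => ?_
  rw [Finset.sum_ite_eq]
  simp

lemma sum_distOf [Fintype α] [DecidableEq α] (p : Ω → ℝ) (X : Ω → α) :
    ∑ a, distOf p X a = ∑ ω, p ω := by
  simpa using sum_weight p X (fun _ => 1)

lemma apply_le_distOf [DecidableEq α] (hp : ∀ ω, 0 ≤ p ω) (X : Ω → α) (ω : Ω) :
    p ω ≤ distOf p X (X ω) := by
  have := Finset.single_le_sum (f := fun ω' => if X ω' = X ω then p ω' else 0)
    (fun i _ => by split <;> simp [hp i]) (Finset.mem_univ ω)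
  simpa [distOf] using this

lemma entOf_congr [Fintype α] [DecidableEq α] {X Y : Ω → α} (h : IdentDist p X Y) :
    entOf p X = entOf p Y := by
  unfold entOf
  congr 1
  exact Finset.sum_congr rfl fun a _ => by rw [h a]

lemma distOf_comp_inj [DecidableEq α] [DecidableEq β] {f : α → β}
    (hf : Function.Injective f) (X : Ω → α) (a : α) :
    distOf p (fun ω => f (X ω)) (f a) = distOf p X a := by
  unfold distOf
  exact Finset.sum_congr rfl fun ω _ => by simp [hf.eq_iff]

lemma entOf_comp_inj [Fintype α] [Fintype β] [DecidableEq α] [DecidableEq β] {f : α → β}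
    (hf : Function.Injective f) (X : Ω → α) :
    entOf p (fun ω => f (X ω)) = entOf p X := by
  unfold entOf
  congr 1
  have h0 : ∀ b ∈ Finset.univ, b ∉ Finset.image f Finset.univ →
      distOf p (fun ω => f (X ω)) b * Real.log (distOf p (fun ω => f (X ω)) b) = 0 := by
    intro b _ hb
    have : distOf p (fun ω => f (X ω)) b = 0 := by
      unfold distOf
      refine Finset.sum_eq_zero fun ω _ => ?_
      have : f (X ω) ≠ b := fun h => hb (by simpa [← h] using Finset.mem_image_of_mem f (Finset.mem_univ (X ω)))
      simp [this]
    simp [this]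
  rw [← Finset.sum_subset (Finset.subset_univ _) h0,
    Finset.sum_image (fun a _ a' _ h => hf h)]
  exact Finset.sum_congr rfl fun a _ => by rw [distOf_comp_inj hf]

lemma entOf_eq_sum_omega [Fintype α] [DecidableEq α] (p : Ω → ℝ) (X : Ω → α) :
    entOf p X = -∑ ω, p ω * Real.log (distOf p X (X ω)) := by
  unfold entOf
  rw [sum_weight]

lemma condEnt_comp [Fintype α] [Fintype β] [Fintype γ] [DecidableEq α] [DecidableEq β]
    [DecidableEq γ] {f : α → β} (hf : Function.Injective f) (X : Ω → γ) (Y : Ω → α) :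
    condEntOf p X (fun ω => f (Y ω)) = condEntOf p X Y := by
  unfold condEntOf
  rw [entOf_comp_inj hf]
  congr 1
  have hpm : Function.Injective (Prod.map (id : γ → γ) f) :=
    Function.injective_id.prodMap hf
  exact entOf_comp_inj hpm (fun ω => (X ω, Y ω))

lemma distOf_fst_sum [Fintype α] [DecidableEq α] [DecidableEq γ]
    (A : Ω → α) (C : Ω → γ) (c : γ) :
    ∑ a, distOf p (fun ω => (A ω, C ω)) (a, c) = distOf p C c := by
  unfold distOf
  rw [Finset.sum_comm]
  refine Finset.sum_congr rfl fun ω _ => ?_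
  by_cases h : C ω = c <;> simp [Prod.ext_iff, h, Finset.sum_ite_eq]

end Aux

section Core

variable {Ω α β γ : Type*} [Fintype Ω] [Fintype α] [Fintype β] [Fintype γ]
  [DecidableEq α] [DecidableEq β] [DecidableEq γ] {p : Ω → ℝ}

lemma cmi_expand (p : Ω → ℝ) (A : Ω → α) (B : Ω → β) (C : Ω → γ) :
    cmiOf p A B C = ∑ ω, p ω *
      (Real.log (distOf p (fun ω => (A ω, B ω, C ω)) (A ω, B ω, C ω))
        + Real.log (distOf p C (C ω))
        - Real.log (distOf p (fun ω => (A ω, C ω)) (A ω, C ω))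
        - Real.log (distOf p (fun ω => (B ω, C ω)) (B ω, C ω))) := by
  unfold cmiOf condEntOf
  rw [entOf_eq_sum_omega p (fun ω => (A ω, C ω)), entOf_eq_sum_omega p C,
    entOf_eq_sum_omega p (fun ω => (A ω, (B ω, C ω))),
    entOf_eq_sum_omega p (fun ω => (B ω, C ω))]
  simp only [mul_add, mul_sub, Finset.sum_add_distrib, Finset.sum_sub_distrib]
  ring

lemma distOf_triple_le (hp : ∀ ω, 0 ≤ p ω) (A : Ω → α) (B : Ω → β) (C : Ω → γ)
    (x : α × β × γ) :
    distOf p (fun ω => (A ω, B ω, C ω)) x ≤ distOf p C x.2.2 := by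
  refine Finset.sum_le_sum fun ω _ => ?_
  dsimp only
  split_ifs with h1 h2
  · exact le_refl _
  · exact absurd (congrArg (fun y => y.2.2) h1) h2
  · exact hp ω
  · exact le_refl _

lemma cmi_nonneg (hp : IsPMF p) (A : Ω → α) (B : Ω → β) (C : Ω → γ) :
    0 ≤ cmiOf p A B C := by
  obtain ⟨hp0, hp1⟩ := hp
  set dABC := distOf p (fun ω => (A ω, B ω, C ω)) with hdABC
  set dAC := distOf p (fun ω => (A ω, C ω)) with hdAC
  set dBC := distOf p (fun ω => (B ω, C ω)) with hdBC
  set dC := distOf p C with hdC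
  rw [cmi_expand]
  have key : ∀ ω, p ω - p ω * (dAC (A ω, C ω) * dBC (B ω, C ω)
      / (dABC (A ω, B ω, C ω) * dC (C ω))) ≤
      p ω * (Real.log (dABC (A ω, B ω, C ω)) + Real.log (dC (C ω))
        - Real.log (dAC (A ω, C ω)) - Real.log (dBC (B ω, C ω))) := by
    intro ω
    rcases eq_or_lt_of_le (hp0 ω) with h0 | h0
    · rw [← h0]; simp
    · have h1 : 0 < dABC (A ω, B ω, C ω) :=
        lt_of_lt_of_le h0 (apply_le_distOf hp0 _ ω)
      have h2 : 0 < dC (C ω) := lt_of_lt_of_le h0 (apply_le_distOf hp0 C ω)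
      have h3 : 0 < dAC (A ω, C ω) := lt_of_lt_of_le h0 (apply_le_distOf hp0 _ ω)
      have h4 : 0 < dBC (B ω, C ω) := lt_of_lt_of_le h0 (apply_le_distOf hp0 _ ω)
      set x := dAC (A ω, C ω) * dBC (B ω, C ω) / (dABC (A ω, B ω, C ω) * dC (C ω)) with hx
      have hxpos : 0 < x := by positivity
      have hlog : Real.log x ≤ x - 1 := Real.log_le_sub_one_of_pos hxpos
      have hlogx : Real.log x = Real.log (dAC (A ω, C ω)) + Real.log (dBC (B ω, C ω))
          - Real.log (dABC (A ω, B ω, C ω)) - Real.log (dC (C ω)) := by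
        rw [hx, Real.log_div (by positivity) (by positivity),
          Real.log_mul h3.ne' h4.ne', Real.log_mul h1.ne' h2.ne']
        ring
      nlinarith [mul_le_mul_of_nonneg_left hlog (le_of_lt h0)]
  have hwle : ∑ ω, p ω * (dAC (A ω, C ω) * dBC (B ω, C ω)
      / (dABC (A ω, B ω, C ω) * dC (C ω))) ≤ 1 := by
    have grp : ∑ ω, p ω * (dAC (A ω, C ω) * dBC (B ω, C ω)
        / (dABC (A ω, B ω, C ω) * dC (C ω))) =
        ∑ x : α × β × γ, dABC x * (dAC (x.1, x.2.2) * dBC (x.2.1, x.2.2)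
        / (dABC x * dC x.2.2)) := by
      rw [hdABC, ← sum_weight p (fun ω => (A ω, B ω, C ω))
        (fun x => distOf p (fun ω => (A ω, C ω)) (x.1, x.2.2) *
          distOf p (fun ω => (B ω, C ω)) (x.2.1, x.2.2) /
          (distOf p (fun ω => (A ω, B ω, C ω)) x * distOf p C x.2.2))]
    rw [grp]
    have step1 : ∀ x : α × β × γ, dABC x * (dAC (x.1, x.2.2) * dBC (x.2.1, x.2.2)
        / (dABC x * dC x.2.2)) ≤ dAC (x.1, x.2.2) * dBC (x.2.1, x.2.2) / dC x.2.2 := by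
      intro x
      have hs := distOf_nonneg hp0 (fun ω => (A ω, C ω)) (x.1, x.2.2)
      have ht := distOf_nonneg hp0 (fun ω => (B ω, C ω)) (x.2.1, x.2.2)
      have hc := distOf_nonneg hp0 C x.2.2
      rcases eq_or_lt_of_le (distOf_nonneg hp0 (fun ω => (A ω, B ω, C ω)) x) with h | h
      · rw [← hdABC] at h
        rw [← h, zero_mul]
        rw [← hdAC, ← hdBC, ← hdC] at *
        positivity
      · rw [← hdABC] at h
        rw [← mul_div_assoc, mul_div_mul_left _ _ h.ne']
    calc ∑ x : α × β × γ, dABC x * (dAC (x.1, x.2.2) * dBC (x.2.1, x.2.2)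
          / (dABC x * dC x.2.2))
        ≤ ∑ x : α × β × γ, dAC (x.1, x.2.2) * dBC (x.2.1, x.2.2) / dC x.2.2 :=
          Finset.sum_le_sum fun x _ => step1 x
      _ = ∑ c, ∑ a, ∑ b, dAC (a, c) * dBC (b, c) / dC c := by
          rw [Fintype.sum_prod_type]
          simp only [Fintype.sum_prod_type]
          calc ∑ a, ∑ b, ∑ c, dAC (a, c) * dBC (b, c) / dC c
              = ∑ a, ∑ c, ∑ b, dAC (a, c) * dBC (b, c) / dC c :=
                Finset.sum_congr rfl fun a _ => Finset.sum_comm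
            _ = ∑ c, ∑ a, ∑ b, dAC (a, c) * dBC (b, c) / dC c := Finset.sum_comm
      _ ≤ 1 := by
          have hper : ∀ c, ∑ a, ∑ b, dAC (a, c) * dBC (b, c) / dC c ≤ dC c := by
            intro c
            have : ∑ a, ∑ b, dAC (a, c) * dBC (b, c) / dC c
                = (∑ a, dAC (a, c)) * (∑ b, dBC (b, c)) / dC c := by
              rw [Finset.sum_mul_sum, Finset.sum_div]
              exact Finset.sum_congr rfl fun a _ => by rw [Finset.sum_div]
            rw [this, hdAC, hdBC, distOf_fst_sum A C c, distOf_fst_sum B C c, ← hdC]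
            rcases eq_or_lt_of_le (distOf_nonneg hp0 C c) with h | h
            · rw [← hdC] at h; rw [← h]; simp
            · rw [← hdC] at h
              rw [mul_div_assoc, div_self h.ne', mul_one]
          calc ∑ c, ∑ a, ∑ b, dAC (a, c) * dBC (b, c) / dC c
              ≤ ∑ c, dC c := Finset.sum_le_sum fun c _ => hper c
            _ = 1 := by rw [hdC, sum_distOf, hp1]
  calc (0:ℝ) = 1 - 1 := by ring
    _ ≤ (∑ ω, p ω) - ∑ ω, p ω * (dAC (A ω, C ω) * dBC (B ω, C ω)
        / (dABC (A ω, B ω, C ω) * dC (C ω))) := by rw [hp1]; linarith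
    _ = ∑ ω, (p ω - p ω * (dAC (A ω, C ω) * dBC (B ω, C ω)
        / (dABC (A ω, B ω, C ω) * dC (C ω)))) := (Finset.sum_sub_distrib _ _).symm
    _ ≤ ∑ ω, p ω * (Real.log (dABC (A ω, B ω, C ω)) + Real.log (dC (C ω))
        - Real.log (dAC (A ω, C ω)) - Real.log (dBC (B ω, C ω))) :=
        Finset.sum_le_sum fun ω _ => key ω

end Core

section Core2

variable {Ω α β γ : Type*} [Fintype Ω] [Fintype α] [Fintype β] [Fintype γ]
  [DecidableEq α] [DecidableEq β] [DecidableEq γ] {p : Ω → ℝ}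

lemma cmi_eq_zero_of_condIndep (hp : IsPMF p) {A : Ω → α} {B : Ω → β} {C : Ω → γ}
    (h : CondIndep p A B C) : cmiOf p A B C = 0 := by
  obtain ⟨hp0, _⟩ := hp
  rw [cmi_expand]
  refine Finset.sum_eq_zero fun ω _ => ?_
  rcases eq_or_lt_of_le (hp0 ω) with h0 | h0
  · rw [← h0, zero_mul]
  · have h1 : 0 < distOf p (fun ω => (A ω, B ω, C ω)) (A ω, B ω, C ω) :=
      lt_of_lt_of_le h0 (apply_le_distOf hp0 _ ω)
    have h2 : 0 < distOf p C (C ω) := lt_of_lt_of_le h0 (apply_le_distOf hp0 C ω)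
    have h3 : 0 < distOf p (fun ω => (A ω, C ω)) (A ω, C ω) :=
      lt_of_lt_of_le h0 (apply_le_distOf hp0 _ ω)
    have h4 : 0 < distOf p (fun ω => (B ω, C ω)) (B ω, C ω) :=
      lt_of_lt_of_le h0 (apply_le_distOf hp0 _ ω)
    have hkey := h (A ω) (B ω) (C ω)
    have : Real.log (distOf p (fun ω => (A ω, B ω, C ω)) (A ω, B ω, C ω))
        + Real.log (distOf p C (C ω))
        = Real.log (distOf p (fun ω => (A ω, C ω)) (A ω, C ω))
        + Real.log (distOf p (fun ω => (B ω, C ω)) (B ω, C ω)) := by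
      rw [← Real.log_mul h1.ne' h2.ne', ← Real.log_mul h3.ne' h4.ne', hkey]
    rw [show ∀ x y z w : ℝ, x + y - z - w = (x + y) - (z + w) from fun _ _ _ _ => by ring,
      this, sub_self, mul_zero]

lemma cmi_comm (p : Ω → ℝ) (A : Ω → α) (B : Ω → β) (C : Ω → γ) :
    cmiOf p A B C = cmiOf p B A C := by
  rw [cmi_expand, cmi_expand]
  refine Finset.sum_congr rfl fun ω _ => ?_
  have hswap : Function.Injective (fun x : α × β × γ => (x.2.1, x.1, x.2.2)) := by
    intro x y h
    obtain ⟨x1, x2, x3⟩ := x; obtain ⟨y1, y2, y3⟩ := y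
    simp only [Prod.mk.injEq] at h
    simp [Prod.ext_iff, h.1, h.2.1, h.2.2]
  have hd : distOf p (fun ω => (B ω, A ω, C ω)) (B ω, A ω, C ω)
      = distOf p (fun ω => (A ω, B ω, C ω)) (A ω, B ω, C ω) :=
    distOf_comp_inj hswap (fun ω => (A ω, B ω, C ω)) (A ω, B ω, C ω)
  rw [hd]
  ring

lemma condEnt_swap (p : Ω → ℝ) (X : Ω → γ) (Y : Ω → α) (Y' : Ω → β) :
    condEntOf p X (fun ω => (Y ω, Y' ω)) = condEntOf p X (fun ω => (Y' ω, Y ω)) := by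
  have := condEnt_comp (p := p) (Prod.swap_injective (α := β) (β := α)) X
    (fun ω => (Y' ω, Y ω))
  have h2 : (fun ω => Prod.swap (Y' ω, Y ω)) = fun ω => (Y ω, Y' ω) := rfl
  rw [h2] at this
  exact this

end Core2

section Snoc

variable {Ω 𝒵 𝒲 𝒱 : Type*} [Fintype Ω]

def snocMap (𝒵 𝒱 : Type*) (j : ℕ) : 𝒵 × ((Fin j → 𝒵) × 𝒱) → (Fin (j+1) → 𝒵) × 𝒱 :=
  fun x => (Fin.snoc x.2.1 x.1, x.2.2)

lemma snocMap_injective (𝒵 𝒱 : Type*) (j : ℕ) : Function.Injective (snocMap 𝒵 𝒱 j) := by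
  intro x y h
  obtain ⟨xz, xt, xv⟩ := x; obtain ⟨yz, yt, yv⟩ := y
  simp only [snocMap, Prod.mk.injEq] at h
  obtain ⟨h1, h2⟩ := h
  have hz : xz = yz := by
    have := congrFun h1 (Fin.last j)
    simpa [Fin.snoc_last] using this
  have ht : xt = yt := by
    funext i
    have := congrFun h1 i.castSucc
    simpa [Fin.snoc_castSucc] using this
  simp [hz, ht, h2]

lemma tuple_succ (Z : ℕ → Ω → 𝒵) (V : Ω → 𝒱) (j : ℕ) :
    (fun ω => ((fun i : Fin (j+1) => Z i.val ω), V ω)) =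
    fun ω => snocMap 𝒵 𝒱 j (Z j ω, ((fun i : Fin j => Z i.val ω), V ω)) := by
  funext ω
  refine Prod.ext_iff.mpr ⟨?_, rfl⟩
  show (fun i : Fin (j+1) => Z i.val ω) = Fin.snoc (fun i : Fin j => Z i.val ω) (Z j ω)
  funext i
  refine Fin.lastCases ?_ ?_ i
  · simp [Fin.snoc_last]
  · intro k
    simp [Fin.snoc_castSucc]

def zeroMap (𝒵 𝒱 : Type*) : 𝒱 → (Fin 0 → 𝒵) × 𝒱 := fun v => ((fun i => i.elim0), v)

lemma zeroMap_injective (𝒵 𝒱 : Type*) : Function.Injective (zeroMap 𝒵 𝒱) :=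
  fun a b h => (Prod.ext_iff.mp h).2

lemma tuple_zero (Z : ℕ → Ω → 𝒵) (V : Ω → 𝒱) :
    (fun ω => ((fun i : Fin 0 => Z i.val ω), V ω)) = fun ω => zeroMap 𝒵 𝒱 (V ω) := by
  funext ω
  exact Prod.ext_iff.mpr ⟨Subsingleton.elim _ _, rfl⟩

end Snoc

section Steps

variable {Ω 𝒵 𝒲 γ δ : Type*} [Fintype Ω] [Fintype 𝒵] [Fintype 𝒲] [Fintype γ] [Fintype δ]
  [DecidableEq 𝒵] [DecidableEq 𝒲] [DecidableEq γ] [DecidableEq δ] {p : Ω → ℝ}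

lemma step_lemma (hp : IsPMF p) (Zj Zj1 : Ω → 𝒵) (W : Ω → 𝒲) (Cj : Ω → γ) (Cj1 : Ω → δ)
    (f : 𝒵 × γ → δ) (hf : Function.Injective f)
    (hC : Cj1 = fun ω => f (Zj ω, Cj ω))
    (hex : IdentDist p (fun ω => (Zj ω, Cj ω)) (fun ω => (Zj1 ω, Cj ω)))
    (hid : IdentDist p (fun ω => (Zj ω, W ω)) (fun ω => (Zj1 ω, W ω)))
    (hci1 : CondIndep p Zj1 Cj1 W) (hci0 : CondIndep p Zj Cj W) :
    cmiOf p W Zj1 Cj1 ≤ cmiOf p W Zj Cj := by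
  have key1 : cmiOf p W Zj1 Cj1 = condEntOf p Zj1 Cj1 - condEntOf p Zj1 W := by
    rw [cmi_comm p W Zj1 Cj1]
    show condEntOf p Zj1 Cj1 - condEntOf p Zj1 (fun ω => (W ω, Cj1 ω)) = _
    congr 1
    rw [condEnt_swap p Zj1 W Cj1]
    have h0 := cmi_eq_zero_of_condIndep hp hci1
    unfold cmiOf at h0
    linarith
  have key0 : cmiOf p W Zj Cj = condEntOf p Zj Cj - condEntOf p Zj W := by
    rw [cmi_comm p W Zj Cj]
    show condEntOf p Zj Cj - condEntOf p Zj (fun ω => (W ω, Cj ω)) = _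
    congr 1
    rw [condEnt_swap p Zj W Cj]
    have h0 := cmi_eq_zero_of_condIndep hp hci0
    unfold cmiOf at h0
    linarith
  rw [key1, key0]
  have hA : condEntOf p Zj1 Cj1 = condEntOf p Zj1 (fun ω => (Zj ω, Cj ω)) := by
    rw [hC]
    exact condEnt_comp hf Zj1 (fun ω => (Zj ω, Cj ω))
  have hB : condEntOf p Zj1 (fun ω => (Zj ω, Cj ω)) ≤ condEntOf p Zj1 Cj := by
    have := cmi_nonneg hp Zj1 Zj Cj
    unfold cmiOf at this
    linarith
  have hE : condEntOf p Zj1 Cj = condEntOf p Zj Cj := by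
    unfold condEntOf
    have := entOf_congr (p := p) hex
    linarith
  have hW : condEntOf p Zj1 W = condEntOf p Zj W := by
    unfold condEntOf
    have := entOf_congr (p := p) hid
    linarith
  linarith

lemma chain_term (p : Ω → ℝ) (W : Ω → 𝒲) (Zj : Ω → 𝒵) (Cj : Ω → γ) (Cj1 : Ω → δ)
    (f : 𝒵 × γ → δ) (hf : Function.Injective f)
    (hC : Cj1 = fun ω => f (Zj ω, Cj ω)) :
    cmiOf p W Zj Cj = condEntOf p W Cj - condEntOf p W Cj1 := by
  show condEntOf p W Cj - condEntOf p W (fun ω => (Zj ω, Cj ω)) = _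
  congr 1
  rw [hC]
  exact (condEnt_comp hf W (fun ω => (Zj ω, Cj ω))).symm

end Steps

/-- for samples Z_0, Z_1, ... conditionally i.i.d. given W, with V
such that each Z_j ⊥ (Z_{<j}, V) | W and the tuples are exchangeable in
distribution, the single-step conditional mutual informations are monotone, and
consequently I(W; Z_{<m} | V) ≥ m · I(W; Z_m | Z_{<m}, V). -/
theorem cmi_step_monotone_and_bound
    {Ω 𝒵 𝒲 𝒱 : Type*} [Fintype Ω] [Fintype 𝒵] [Fintype 𝒲] [Fintype 𝒱]
    [DecidableEq 𝒵] [DecidableEq 𝒲] [DecidableEq 𝒱]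
    (p : Ω → ℝ) (hp : IsPMF p) (m : ℕ)
    (Z : ℕ → Ω → 𝒵) (W : Ω → 𝒲) (V : Ω → 𝒱)
    (hexch : ∀ j ≤ m, IdentDist p
      (fun ω => (Z j ω, (fun i : Fin j => Z i.val ω), V ω))
      (fun ω => (Z (j+1) ω, (fun i : Fin j => Z i.val ω), V ω)))
    (hid : ∀ j ≤ m, IdentDist p (fun ω => (Z j ω, W ω)) (fun ω => (Z (j+1) ω, W ω)))
    (hci : ∀ j ≤ m + 1, CondIndep p (Z j)
      (fun ω => ((fun i : Fin j => Z i.val ω), V ω)) W) :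
    (∀ j ≤ m,
      cmiOf p W (Z (j+1)) (fun ω => ((fun i : Fin (j+1) => Z i.val ω), V ω)) ≤
        cmiOf p W (Z j) (fun ω => ((fun i : Fin j => Z i.val ω), V ω))) ∧
    (m : ℝ) * cmiOf p W (Z m) (fun ω => ((fun i : Fin m => Z i.val ω), V ω)) ≤
      cmiOf p W (fun ω => (fun i : Fin m => Z i.val ω)) V := by
  have hstep : ∀ j ≤ m,
      cmiOf p W (Z (j+1)) (fun ω => ((fun i : Fin (j+1) => Z i.val ω), V ω)) ≤
        cmiOf p W (Z j) (fun ω => ((fun i : Fin j => Z i.val ω), V ω)) := by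
    intro j hj
    exact step_lemma hp (Z j) (Z (j+1)) W
      (fun ω => ((fun i : Fin j => Z i.val ω), V ω))
      (fun ω => ((fun i : Fin (j+1) => Z i.val ω), V ω))
      (snocMap 𝒵 𝒱 j) (snocMap_injective 𝒵 𝒱 j) (tuple_succ Z V j)
      (hexch j hj) (hid j hj) (hci (j+1) (by omega)) (hci j (by omega))
  refine ⟨hstep, ?_⟩
  -- telescoping
  have hterm : ∀ j, cmiOf p W (Z j) (fun ω => ((fun i : Fin j => Z i.val ω), V ω)) =
      condEntOf p W (fun ω => ((fun i : Fin j => Z i.val ω), V ω)) -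
      condEntOf p W (fun ω => ((fun i : Fin (j+1) => Z i.val ω), V ω)) := fun j =>
    chain_term p W (Z j)
      (fun ω => ((fun i : Fin j => Z i.val ω), V ω))
      (fun ω => ((fun i : Fin (j+1) => Z i.val ω), V ω))
      (snocMap 𝒵 𝒱 j) (snocMap_injective 𝒵 𝒱 j) (tuple_succ Z V j)
  have htel : cmiOf p W (fun ω => (fun i : Fin m => Z i.val ω)) V =
      ∑ j ∈ Finset.range m,
        cmiOf p W (Z j) (fun ω => ((fun i : Fin j => Z i.val ω), V ω)) := by
    rw [Finset.sum_congr rfl (fun j _ => hterm j), Finset.sum_range_sub'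
      (f := fun j => condEntOf p W (fun ω => ((fun i : Fin j => Z i.val ω), V ω)))]
    have h0 : condEntOf p W (fun ω => ((fun i : Fin 0 => Z i.val ω), V ω)) =
        condEntOf p W V := by
      rw [tuple_zero Z V]
      exact condEnt_comp (zeroMap_injective 𝒵 𝒱) W V
    show condEntOf p W V -
        condEntOf p W (fun ω => ((fun i : Fin m => Z i.val ω), V ω)) = _
    rw [h0]
  have hmono : ∀ j ≤ m,
      cmiOf p W (Z m) (fun ω => ((fun i : Fin m => Z i.val ω), V ω)) ≤
        cmiOf p W (Z j) (fun ω => ((fun i : Fin j => Z i.val ω), V ω)) := by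
    have haux : ∀ i, ∀ j, j + i ≤ m →
        cmiOf p W (Z (j+i)) (fun ω => ((fun i' : Fin (j+i) => Z i'.val ω), V ω)) ≤
          cmiOf p W (Z j) (fun ω => ((fun i : Fin j => Z i.val ω), V ω)) := by
      intro i
      induction i with
      | zero => intro j _; exact le_refl _
      | succ i ih =>
          intro j hj
          have h1 := hstep (j+i) (by omega)
          have h2 := ih j (by omega)
          exact le_trans h1 h2
    intro j hj
    have := haux (m - j) j (by omega)
    have hmj : j + (m - j) = m := by omega
    rw [hmj] at this
    exact this
  calc (m : ℝ) * cmiOf p W (Z m) (fun ω => ((fun i : Fin m => Z i.val ω), V ω))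
      = ∑ _j ∈ Finset.range m,
          cmiOf p W (Z m) (fun ω => ((fun i : Fin m => Z i.val ω), V ω)) := by
        rw [Finset.sum_const, Finset.card_range, nsmul_eq_mul]
    _ ≤ ∑ j ∈ Finset.range m,
          cmiOf p W (Z j) (fun ω => ((fun i : Fin j => Z i.val ω), V ω)) :=
        Finset.sum_le_sum fun j hj => hmono j (le_of_lt (Finset.mem_range.mp hj))
    _ = cmiOf p W (fun ω => (fun i : Fin m => Z i.val ω)) V := htel.symm
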